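/- Let l : 2^V → ℝ be submodular and increasing with l(∅) = 0. Then the Lovász hinge (increasing case) L1_l is a convex function on ℝ^p and is an extension of l, i.e. L1_l(1_A) = l(A) for every A ⊆ V. -/
import Mathlib


open Finset

/-- The chain {σ₁,…,σⱼ}: the image under σ of the first j indices. -/
def chainSet {p : ℕ} (σ : Equiv.Perm (Fin p)) (j : ℕ) : Finset (Fin p) :=
  (Finset.univ.filter fun k : Fin p => (k : ℕ) < j).image σ

/-- G_l(σ, s) = Σ_{j=1}^p s_{σ_j}·(l({σ₁,…,σⱼ}) − l({σ₁,…,σ_{j−1}})). -/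
def lovaszSum {p : ℕ} (l : Finset (Fin p) → ℝ) (σ : Equiv.Perm (Fin p))
    (s : Fin p → ℝ) : ℝ :=
  ∑ j : Fin p, s (σ j) * (l (chainSet σ ((j : ℕ) + 1)) - l (chainSet σ (j : ℕ)))

/-- Indicator vector 1_A ∈ {0,1}^p of A ⊆ V. -/
def indic {p : ℕ} (A : Finset (Fin p)) : Fin p → ℝ := fun i => if i ∈ A then 1 else 0

/-- A permutation sorting s in decreasing order: s_{π_1} ≥ … ≥ s_{π_p}. -/
def SortsDesc {p : ℕ} (π : Equiv.Perm (Fin p)) (s : Fin p → ℝ) : Prop :=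
  ∀ j k : Fin p, j ≤ k → s (π k) ≤ s (π j)

/-- A canonical permutation sorting s in decreasing order. -/
noncomputable def sortDesc {p : ℕ} (s : Fin p → ℝ) : Equiv.Perm (Fin p) :=
  Tuple.sort (fun i => -s i)

/-- The Lovász extension ℓ̂(s) = G_l(π, s) for a permutation π sorting s
decreasingly (independent of the choice of such π). -/
noncomputable def lovaszExt {p : ℕ} (l : Finset (Fin p) → ℝ) (s : Fin p → ℝ) : ℝ :=
  lovaszSum l (sortDesc s) s

/-- Submodularity: l(A) + l(B) ≥ l(A ∪ B) + l(A ∩ B). -/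
def Submodular {p : ℕ} (l : Finset (Fin p) → ℝ) : Prop :=
  ∀ A B : Finset (Fin p), l (A ∪ B) + l (A ∩ B) ≤ l A + l B

/-- The slack-rescaling surrogate S_l(s) = max_{I⊆V} l(I)·(1 − 2 Σ_{i∈I}(1 − s_i)). -/
noncomputable def slackSur {p : ℕ} (l : Finset (Fin p) → ℝ) (s : Fin p → ℝ) : ℝ :=
  Finset.univ.sup' Finset.univ_nonempty
    (fun I : Finset (Fin p) => l I * (1 - 2 * ∑ i ∈ I, (1 - s i)))

/-- The margin-rescaling surrogate M_l(s) = max_{I⊆V} ( l(I) − 2 Σ_{i∈I}(1 − s_i) ). -/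
noncomputable def marginSur {p : ℕ} (l : Finset (Fin p) → ℝ) (s : Fin p → ℝ) : ℝ :=
  Finset.univ.sup' Finset.univ_nonempty
    (fun I : Finset (Fin p) => l I - 2 * ∑ i ∈ I, (1 - s i))

/-- The Lovász hinge, general (non-monotonic) case. -/
noncomputable def hingeGen {p : ℕ} (l : Finset (Fin p) → ℝ) (s : Fin p → ℝ) : ℝ :=
  Finset.univ.sup' Finset.univ_nonempty
    (fun σ : Equiv.Perm (Fin p) => max 0 (lovaszSum l σ s))

/-- The Lovász hinge, increasing case (componentwise thresholding). -/
noncomputable def hingeInc {p : ℕ} (l : Finset (Fin p) → ℝ) (s : Fin p → ℝ) : ℝ :=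
  Finset.univ.sup' Finset.univ_nonempty
    (fun σ : Equiv.Perm (Fin p) =>
      ∑ j : Fin p, max (s (σ j)) 0 *
        (l (chainSet σ ((j : ℕ) + 1)) - l (chainSet σ (j : ℕ))))

section Aux

variable {p : ℕ}

lemma mem_chainSet {σ : Equiv.Perm (Fin p)} {j : ℕ} {x : Fin p} :
    x ∈ chainSet σ j ↔ ((σ.symm x : ℕ) < j) := by
  simp only [chainSet, mem_image, mem_filter, mem_univ, true_and]
  constructor
  · rintro ⟨k, hk, rfl⟩; simpa using hk
  · intro h; exact ⟨σ.symm x, h, by simp⟩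

lemma chainSet_zero (σ : Equiv.Perm (Fin p)) : chainSet σ 0 = ∅ := by
  ext x; simp [mem_chainSet]

lemma chainSet_top (σ : Equiv.Perm (Fin p)) : chainSet σ p = univ := by
  ext x; simp [mem_chainSet, (σ.symm x).isLt]

lemma chainSet_succ (σ : Equiv.Perm (Fin p)) (j : Fin p) :
    chainSet σ ((j : ℕ) + 1) = insert (σ j) (chainSet σ (j : ℕ)) := by
  ext x
  simp only [mem_chainSet, mem_insert, Nat.lt_succ_iff_lt_or_eq]
  constructor
  · rintro (h | h)
    · exact Or.inr h
    · left
      have : σ.symm x = j := Fin.ext h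
      rw [← this]; simp
  · rintro (rfl | h)
    · right; simp
    · exact Or.inl h

lemma notMem_chainSet (σ : Equiv.Perm (Fin p)) (j : Fin p) :
    σ j ∉ chainSet σ (j : ℕ) := by simp [mem_chainSet]

lemma chainSet_mono (σ : Equiv.Perm (Fin p)) {j k : ℕ} (h : j ≤ k) :
    chainSet σ j ⊆ chainSet σ k := by
  intro x hx; rw [mem_chainSet] at *; omega

lemma card_filter_lt (j : ℕ) (hj : j ≤ p) :
    (Finset.univ.filter fun k : Fin p => (k : ℕ) < j).card = j := by
  refine Eq.trans (Finset.card_bij (t := Finset.range j) (fun k _ => (k : ℕ)) ?_ ?_ ?_)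
    (Finset.card_range j)
  · intro k hk; simp at hk ⊢; exact hk
  · intro a _ b _ h; exact Fin.ext h
  · intro m hm; simp only [mem_range] at hm
    exact ⟨⟨m, lt_of_lt_of_le hm hj⟩, by simp [hm], rfl⟩

lemma downclosed_mem {S : Finset (Fin p)} (hdc : ∀ j k : Fin p, j ≤ k → k ∈ S → j ∈ S)
    (j : Fin p) : j ∈ S ↔ (j : ℕ) < S.card := by
  constructor
  · intro hj
    have hsub : Finset.Iic j ⊆ S := fun k hk => hdc k j (mem_Iic.mp hk) hj
    have := Finset.card_le_card hsub
    rw [Fin.card_Iic] at this; omega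
  · intro hj
    by_contra hjS
    have hsub : S ⊆ Finset.Iio j := by
      intro k hk
      rw [mem_Iio]
      by_contra hkj
      exact hjS (hdc j k (le_of_not_gt hkj) hk)
    have := Finset.card_le_card hsub
    rw [Fin.card_Iio] at this; omega

lemma dimret {l : Finset (Fin p) → ℝ} (hsub : Submodular l) {S T : Finset (Fin p)}
    (hST : S ⊆ T) {x : Fin p} (hx : x ∉ T) :
    l (insert x T) - l T ≤ l (insert x S) - l S := by
  have h := hsub (insert x S) T
  have hu : insert x S ∪ T = insert x T := by
    ext y; simp only [mem_union, mem_insert]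
    constructor
    · rintro ((rfl | h) | h)
      · exact Or.inl rfl
      · exact Or.inr (hST h)
      · exact Or.inr h
    · rintro (rfl | h)
      · exact Or.inl (Or.inl rfl)
      · exact Or.inr h
  have hi : insert x S ∩ T = S := by
    ext y; simp only [mem_inter, mem_insert]
    constructor
    · rintro ⟨rfl | h, hT⟩
      · exact absurd hT hx
      · exact h
    · intro h; exact ⟨Or.inr h, hST h⟩
  rw [hu, hi] at h
  linarith

lemma term_le_D {l : Finset (Fin p) → ℝ} (hsub : Submodular l) (σ : Equiv.Perm (Fin p))
    (A : Finset (Fin p)) (j : Fin p) :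
    indic A (σ j) * (l (chainSet σ ((j : ℕ) + 1)) - l (chainSet σ (j : ℕ)))
      ≤ l (chainSet σ ((j : ℕ) + 1) ∩ A) - l (chainSet σ (j : ℕ) ∩ A) := by
  by_cases h : σ j ∈ A
  · have h1 : chainSet σ ((j : ℕ) + 1) ∩ A = insert (σ j) (chainSet σ (j : ℕ) ∩ A) := by
      rw [chainSet_succ, Finset.insert_inter_of_mem h]
    rw [h1, chainSet_succ]
    simpa [indic, h] using dimret hsub (Finset.inter_subset_left (s₂ := A)) (notMem_chainSet σ j)
  · have h1 : chainSet σ ((j : ℕ) + 1) ∩ A = chainSet σ (j : ℕ) ∩ A := by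
      rw [chainSet_succ, Finset.insert_inter_of_notMem h]
    simp [indic, h, h1]

lemma tele (l : Finset (Fin p) → ℝ) (σ : Equiv.Perm (Fin p)) (A : Finset (Fin p)) :
    ∑ j : Fin p, (l (chainSet σ ((j : ℕ) + 1) ∩ A) - l (chainSet σ (j : ℕ) ∩ A))
      = l A - l ∅ := by
  have := Fin.sum_univ_eq_sum_range
    (fun j : ℕ => l (chainSet σ (j + 1) ∩ A) - l (chainSet σ j ∩ A)) p
  rw [this, Finset.sum_range_sub (fun j : ℕ => l (chainSet σ j ∩ A)),
    chainSet_top, chainSet_zero, Finset.univ_inter, Finset.empty_inter]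

lemma good_perm (A : Finset (Fin p)) (j : Fin p) :
    (sortDesc (indic A)) j ∈ A ↔ (j : ℕ) < A.card := by
  set σ := sortDesc (indic A) with hσ
  have hmono : Monotone ((fun i => -(indic A i)) ∘ σ) := Tuple.monotone_sort _
  have hdc : ∀ j k : Fin p, j ≤ k → σ k ∈ A → σ j ∈ A := by
    intro j k hjk hk
    have h := hmono hjk
    simp only [Function.comp_apply, indic, hk, if_true] at h
    by_contra hj
    simp only [indic, hj, if_false] at h
    norm_num at h
  have hcard : (Finset.univ.filter fun j : Fin p => σ j ∈ A).card = A.card := by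
    refine Finset.card_bij (fun j _ => σ j) ?_ ?_ ?_
    · intro j hj; exact (mem_filter.mp hj).2
    · intro a _ b _ h; exact σ.injective h
    · intro a ha; exact ⟨σ.symm a, by simp [ha], by simp⟩
  have := downclosed_mem (S := Finset.univ.filter fun j : Fin p => σ j ∈ A)
    (fun j k hjk hk => mem_filter.mpr ⟨mem_univ _, hdc j k hjk (mem_filter.mp hk).2⟩) j
  rw [hcard] at this
  simpa using this

lemma chainSet_card_eq (A : Finset (Fin p)) :
    chainSet (sortDesc (indic A)) A.card = A := by
  have hm : A.card ≤ p := by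
    simpa using Finset.card_le_univ A
  have hsub : chainSet (sortDesc (indic A)) A.card ⊆ A := by
    intro x hx
    rw [mem_chainSet] at hx
    have := (good_perm A ((sortDesc (indic A)).symm x)).mpr hx
    simpa using this
  refine Finset.eq_of_subset_of_card_le hsub ?_
  rw [chainSet, Finset.card_image_of_injective _ (sortDesc (indic A)).injective,
    card_filter_lt _ hm]

end Aux

/-- for submodular increasing l with l(∅)=0, the Lovász hinge
(increasing case) is convex on ℝ^p and is an extension of l. -/
theorem hingeInc_convex_and_extension (p : ℕ) (hp : 1 ≤ p)
    (l : Finset (Fin p) → ℝ) (hsub : Submodular l)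
    (hinc : ∀ A B : Finset (Fin p), A ⊆ B → l A ≤ l B) (h0 : l ∅ = 0) :
    ConvexOn ℝ Set.univ (hingeInc l) ∧
      ∀ A : Finset (Fin p), hingeInc l (indic A) = l A := by
  have hmaxind : ∀ (A : Finset (Fin p)) (i : Fin p), max (indic A i) 0 = indic A i := by
    intro A i
    apply max_eq_left
    dsimp [indic]; split <;> norm_num
  constructor
  · refine ⟨convex_univ, fun x _ y _ a b ha hb hab => ?_⟩
    unfold hingeInc
    apply Finset.sup'_le
    intro σ _
    have hC : ∀ j : Fin p, 0 ≤ l (chainSet σ ((j : ℕ) + 1)) - l (chainSet σ (j : ℕ)) :=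
      fun j => sub_nonneg.mpr (hinc _ _ (chainSet_mono σ (Nat.le_succ _)))
    have hterm : ∀ j : Fin p,
        max ((a • x + b • y) (σ j)) 0 * (l (chainSet σ ((j:ℕ)+1)) - l (chainSet σ (j:ℕ)))
          ≤ a * (max (x (σ j)) 0 * (l (chainSet σ ((j:ℕ)+1)) - l (chainSet σ (j:ℕ))))
            + b * (max (y (σ j)) 0 * (l (chainSet σ ((j:ℕ)+1)) - l (chainSet σ (j:ℕ)))) := by
      intro j
      have h1 : max ((a • x + b • y) (σ j)) 0
          ≤ a * max (x (σ j)) 0 + b * max (y (σ j)) 0 := by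
        have hx1 : x (σ j) ≤ max (x (σ j)) 0 := le_max_left _ _
        have hy1 : y (σ j) ≤ max (y (σ j)) 0 := le_max_left _ _
        have hx0 : (0:ℝ) ≤ max (x (σ j)) 0 := le_max_right _ _
        have hy0 : (0:ℝ) ≤ max (y (σ j)) 0 := le_max_right _ _
        simp only [Pi.add_apply, Pi.smul_apply, smul_eq_mul]
        apply max_le
        · nlinarith
        · nlinarith
      calc max ((a • x + b • y) (σ j)) 0 * (l (chainSet σ ((j:ℕ)+1)) - l (chainSet σ (j:ℕ)))
          ≤ (a * max (x (σ j)) 0 + b * max (y (σ j)) 0)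
              * (l (chainSet σ ((j:ℕ)+1)) - l (chainSet σ (j:ℕ))) :=
            mul_le_mul_of_nonneg_right h1 (hC j)
        _ = a * (max (x (σ j)) 0 * (l (chainSet σ ((j:ℕ)+1)) - l (chainSet σ (j:ℕ))))
            + b * (max (y (σ j)) 0 * (l (chainSet σ ((j:ℕ)+1)) - l (chainSet σ (j:ℕ)))) := by
            ring
    calc ∑ j : Fin p, max ((a • x + b • y) (σ j)) 0
            * (l (chainSet σ ((j:ℕ)+1)) - l (chainSet σ (j:ℕ)))
        ≤ ∑ j : Fin p,
            (a * (max (x (σ j)) 0 * (l (chainSet σ ((j:ℕ)+1)) - l (chainSet σ (j:ℕ))))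
              + b * (max (y (σ j)) 0 * (l (chainSet σ ((j:ℕ)+1)) - l (chainSet σ (j:ℕ))))) :=
          Finset.sum_le_sum fun j _ => hterm j
      _ = a * ∑ j : Fin p, max (x (σ j)) 0 * (l (chainSet σ ((j:ℕ)+1)) - l (chainSet σ (j:ℕ)))
            + b * ∑ j : Fin p, max (y (σ j)) 0 * (l (chainSet σ ((j:ℕ)+1)) - l (chainSet σ (j:ℕ)))
          := by rw [Finset.sum_add_distrib, ← Finset.mul_sum, ← Finset.mul_sum]
      _ ≤ a • (Finset.univ.sup' Finset.univ_nonempty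
              (fun σ : Equiv.Perm (Fin p) => ∑ j : Fin p, max (x (σ j)) 0 *
                (l (chainSet σ ((j:ℕ)+1)) - l (chainSet σ (j:ℕ)))))
            + b • (Finset.univ.sup' Finset.univ_nonempty
              (fun σ : Equiv.Perm (Fin p) => ∑ j : Fin p, max (y (σ j)) 0 *
                (l (chainSet σ ((j:ℕ)+1)) - l (chainSet σ (j:ℕ))))) := by
          simp only [smul_eq_mul]
          exact add_le_add
            (mul_le_mul_of_nonneg_left (Finset.le_sup'
              (fun σ : Equiv.Perm (Fin p) => ∑ j : Fin p, max (x (σ j)) 0 *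
                (l (chainSet σ ((j:ℕ)+1)) - l (chainSet σ (j:ℕ)))) (Finset.mem_univ σ)) ha)
            (mul_le_mul_of_nonneg_left (Finset.le_sup'
              (fun σ : Equiv.Perm (Fin p) => ∑ j : Fin p, max (y (σ j)) 0 *
                (l (chainSet σ ((j:ℕ)+1)) - l (chainSet σ (j:ℕ)))) (Finset.mem_univ σ)) hb)
  · intro A
    unfold hingeInc
    simp only [hmaxind]
    apply le_antisymm
    · apply Finset.sup'_le
      intro σ _
      calc ∑ j : Fin p, indic A (σ j) * (l (chainSet σ ((j:ℕ)+1)) - l (chainSet σ (j:ℕ)))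
          ≤ ∑ j : Fin p,
              (l (chainSet σ ((j:ℕ)+1) ∩ A) - l (chainSet σ (j:ℕ) ∩ A)) :=
            Finset.sum_le_sum fun j _ => term_le_D hsub σ A j
        _ = l A - l ∅ := tele l σ A
        _ = l A := by rw [h0]; ring
    · set σ := sortDesc (indic A) with hσ
      have hgood : ∑ j : Fin p, indic A (σ j)
            * (l (chainSet σ ((j:ℕ)+1)) - l (chainSet σ (j:ℕ))) = l A := by
        have hterm : ∀ j : Fin p, indic A (σ j)
            * (l (chainSet σ ((j:ℕ)+1)) - l (chainSet σ (j:ℕ)))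
            = l (chainSet σ ((j:ℕ)+1) ∩ A) - l (chainSet σ (j:ℕ) ∩ A) := by
          intro j
          by_cases h : (j : ℕ) < A.card
          · have hmem : σ j ∈ A := (good_perm A j).mpr h
            have h1 : chainSet σ ((j:ℕ)+1) ⊆ A := by
              rw [← chainSet_card_eq A, ← hσ]
              exact chainSet_mono σ h
            have h0' : chainSet σ (j:ℕ) ⊆ A :=
              Finset.Subset.trans (chainSet_mono σ (Nat.le_succ _)) h1
            rw [Finset.inter_eq_left.mpr h1, Finset.inter_eq_left.mpr h0']
            simp [indic, hmem]
          · have hmem : σ j ∉ A := fun hc => h ((good_perm A j).mp hc)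
            have h1 : chainSet σ ((j:ℕ)+1) ∩ A = chainSet σ (j:ℕ) ∩ A := by
              rw [chainSet_succ, Finset.insert_inter_of_notMem hmem]
            simp [indic, hmem, h1]
        rw [Finset.sum_congr rfl fun j _ => hterm j, tele l σ A, h0, sub_zero]
      rw [← hgood]
      exact Finset.le_sup' (fun σ : Equiv.Perm (Fin p) => ∑ j : Fin p, indic A (σ j)
        * (l (chainSet σ ((j:ℕ)+1)) - l (chainSet σ (j:ℕ)))) (Finset.mem_univ σ)
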